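/- In majority dynamics on a finite graph, consider any sequence of updates starting from a profile s₀. Then there exists a reordered/modified sequence of updates from s₀, containing at most two updates per vertex, in which all 0-to-1 flips precede all 1-to-0 flips, every 0-to-1 flip is performed by a vertex that is unhappy at that moment, and the final profile has at least as many vertices with preference 1 as the final profile of the original sequence provided the original sequence ends in a stable profile. -/

import Mathlib

open Finset

variable {V : Type*}

/-- Number of neighbors of `x` inside the set `A`. -/
def nbrCount [Fintype V] [DecidableEq V] (G : SimpleGraph V) [DecidableRel G.Adj]
    (x : V) (A : Finset V) : ℕ :=
  (A.filter (fun y => G.Adj x y)).card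

/-- The width of the partition `(S, Sᶜ)`: the number of crossing edges. -/
def bwidth [Fintype V] [DecidableEq V] (G : SimpleGraph V) [DecidableRel G.Adj]
    (S : Finset V) : ℕ :=
  ∑ x ∈ S, nbrCount G x Sᶜ

/-- Deficiency of a vertex with respect to the partition `(S, Sᶜ)`. -/
def defic [Fintype V] [DecidableEq V] (G : SimpleGraph V) [DecidableRel G.Adj]
    (S : Finset V) (x : V) : ℤ :=
  if x ∈ S then (nbrCount G x S : ℤ) - (nbrCount G x Sᶜ : ℤ)
  else (nbrCount G x Sᶜ : ℤ) - (nbrCount G x S : ℤ)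

/-- `(S, Sᶜ)` is a minimum bisection: `|S| = ⌈n/2⌉` and the width is minimal among
all such partitions. -/
def IsMinBisection [Fintype V] [DecidableEq V] (G : SimpleGraph V) [DecidableRel G.Adj]
    (S : Finset V) : Prop :=
  S.card = (Fintype.card V + 1) / 2 ∧
  ∀ T : Finset V, T.card = S.card → bwidth G S ≤ bwidth G T

/-- A vertex is unhappy if a strict majority of its neighbors hold the opposite preference. -/
def Unhappy [Fintype V] [DecidableEq V] (G : SimpleGraph V) [DecidableRel G.Adj]
    (s : V → Bool) (x : V) : Prop :=
  (univ.filter (fun y => G.Adj x y ∧ s y = s x)).card <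
  (univ.filter (fun y => G.Adj x y ∧ s y ≠ s x)).card

/-- One update step of the majority dynamics: an unhappy vertex flips its preference. -/
def FlipStep [Fintype V] [DecidableEq V] (G : SimpleGraph V) [DecidableRel G.Adj]
    (s t : V → Bool) : Prop :=
  ∃ x, Unhappy G s x ∧ t = Function.update s x (!s x)

/-- Reachability by a (possibly empty) sequence of updates. -/
def ReachesProf [Fintype V] [DecidableEq V] (G : SimpleGraph V) [DecidableRel G.Adj]
    (s t : V → Bool) : Prop :=
  Relation.ReflTransGen (FlipStep G) s t

/-- A profile is stable if no vertex is unhappy. -/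
def StableProf [Fintype V] [DecidableEq V] (G : SimpleGraph V) [DecidableRel G.Adj]
    (s : V → Bool) : Prop :=
  ∀ x, ¬ Unhappy G s x

/-- Number of vertices with preference 1. -/
def onesCount [Fintype V] (s : V → Bool) : ℕ :=
  (univ.filter (fun x => s x = true)).card

/-- Number of vertices with preference 0. -/
def zerosCount [Fintype V] (s : V → Bool) : ℕ :=
  (univ.filter (fun x => s x = false)).card

/-- Minority becomes majority: there is an initial profile with a strict majority of
0-preferences and a sequence of updates reaching a stable profile in which at most half
of the vertices prefer 0. -/
def MbM [Fintype V] [DecidableEq V] (G : SimpleGraph V) [DecidableRel G.Adj] : Prop :=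
  ∃ s₀ : V → Bool, 2 * zerosCount s₀ > Fintype.card V ∧
    ∃ t, ReachesProf G s₀ t ∧ StableProf G t ∧ 2 * zerosCount t ≤ Fintype.card V

/-- A run of 0-to-1 flips along a list of vertices, each flip performed by an unhappy
vertex currently holding preference 0. -/
inductive Run01 [Fintype V] [DecidableEq V] (G : SimpleGraph V) [DecidableRel G.Adj] :
    (V → Bool) → List V → (V → Bool) → Prop
  | nil (s : V → Bool) : Run01 G s [] s
  | cons (s : V → Bool) (x : V) (L : List V) (t : V → Bool) :
      s x = false → Unhappy G s x →
      Run01 G (Function.update s x true) L t → Run01 G s (x :: L) t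

/-- A run of 1-to-0 flips along a list of vertices (unhappiness not required). -/
inductive Run10 [Fintype V] [DecidableEq V] (G : SimpleGraph V) [DecidableRel G.Adj] :
    (V → Bool) → List V → (V → Bool) → Prop
  | nil (s : V → Bool) : Run10 G s [] s
  | cons (s : V → Bool) (x : V) (L : List V) (t : V → Bool) :
      s x = true →
      Run10 G (Function.update s x false) L t → Run10 G s (x :: L) t

section Aux

variable [Fintype V] [DecidableEq V] (G : SimpleGraph V) [DecidableRel G.Adj]

lemma run01_not_mem {s m : V → Bool} {L : List V} (h : Run01 G s L m) :
    ∀ x, s x = true → x ∉ L := by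
  induction h with
  | nil => simp
  | cons s y L t hy hun h ih =>
    intro x hx hmem
    rcases List.mem_cons.mp hmem with rfl | hmem
    · rw [hx] at hy; exact Bool.noConfusion hy
    · exact ih x (by
        rcases eq_or_ne x y with rfl | hne
        · simp
        · simpa [Function.update_of_ne hne] using hx) hmem

lemma run01_nodup {s m : V → Bool} {L : List V} (h : Run01 G s L m) : L.Nodup := by
  induction h with
  | nil => simp
  | cons s y L t hy hun h ih =>
    exact List.nodup_cons.mpr ⟨run01_not_mem G h y (by simp), ih⟩

lemma run10_not_mem {s m : V → Bool} {L : List V} (h : Run10 G s L m) :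
    ∀ x, s x = false → x ∉ L := by
  induction h with
  | nil => simp
  | cons s y L t hy h ih =>
    intro x hx hmem
    rcases List.mem_cons.mp hmem with rfl | hmem
    · rw [hx] at hy; exact Bool.noConfusion hy
    · exact ih x (by
        rcases eq_or_ne x y with rfl | hne
        · simp
        · simpa [Function.update_of_ne hne] using hx) hmem

lemma run10_nodup {s m : V → Bool} {L : List V} (h : Run10 G s L m) : L.Nodup := by
  induction h with
  | nil => simp
  | cons s y L t hy h ih =>
    exact List.nodup_cons.mpr ⟨run10_not_mem G h y (by simp), ih⟩

lemma unhappy_mono {s s' : V → Bool} {x : V}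
    (hd : ∀ y, s y = true → s' y = true) (hx : s x = false) (hx' : s' x = false)
    (h : Unhappy G s x) : Unhappy G s' x := by
  unfold Unhappy at h ⊢
  rw [hx] at h; rw [hx']
  calc (univ.filter (fun y => G.Adj x y ∧ s' y = false)).card
      ≤ (univ.filter (fun y => G.Adj x y ∧ s y = false)).card := by
        apply Finset.card_le_card
        intro y hy
        simp only [Finset.mem_filter, Finset.mem_univ, true_and] at hy ⊢
        refine ⟨hy.1, ?_⟩
        by_contra hc
        have : s y = true := by simpa using hc
        have := hd y this
        rw [this] at hy
        exact Bool.noConfusion hy.2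
    _ < (univ.filter (fun y => G.Adj x y ∧ s y ≠ false)).card := h
    _ ≤ (univ.filter (fun y => G.Adj x y ∧ s' y ≠ false)).card := by
        apply Finset.card_le_card
        intro y hy
        simp only [Finset.mem_filter, Finset.mem_univ, true_and] at hy ⊢
        refine ⟨hy.1, ?_⟩
        have : s y = true := by simpa using hy.2
        simp [hd y this]

lemma run01_dom {s m : V → Bool} {L : List V} (h : Run01 G s L m) :
    ∀ s' : V → Bool, (∀ y, s y = true → s' y = true) →
    ∃ L' m', Run01 G s' L' m' ∧ (∀ y, m y = true → m' y = true) := by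
  induction h with
  | nil s => exact fun s' hd => ⟨[], s', Run01.nil s', hd⟩
  | cons s x L t hx hun h ih =>
    intro s' hd
    by_cases hx' : s' x = true
    · exact ih s' (fun y hy => by
        rcases eq_or_ne y x with rfl | hne
        · exact hx'
        · exact hd y (by rwa [Function.update_of_ne hne] at hy))
    · have hx'f : s' x = false := by simpa using hx'
      have hun' : Unhappy G s' x := unhappy_mono G hd hx hx'f hun
      obtain ⟨L', m', h', hdm⟩ := ih (Function.update s' x true) (fun y hy => by
        rcases eq_or_ne y x with rfl | hne
        · simp
        · rw [Function.update_of_ne hne] at hy ⊢; exact hd y hy)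
      exact ⟨x :: L', m', Run01.cons _ _ _ _ hx'f hun' h', hdm⟩

lemma run10_dom {m t : V → Bool} {L : List V} (h : Run10 G m L t) :
    ∀ m' : V → Bool, (∀ y, m y = true → m' y = true) →
    ∃ t', Run10 G m' L t' ∧ (∀ y, t y = true → t' y = true) := by
  induction h with
  | nil s => exact fun m' hd => ⟨m', Run10.nil m', hd⟩
  | cons s x L t hx h ih =>
    intro m' hd
    obtain ⟨t', h', hdt⟩ := ih (Function.update m' x false) (fun y hy => by
      rcases eq_or_ne y x with rfl | hne
      · simp at hy
      · rw [Function.update_of_ne hne] at hy ⊢; exact hd y hy)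
    exact ⟨t', Run10.cons _ _ _ _ (hd x hx) h', hdt⟩

lemma onesCount_mono {s t : V → Bool} (hd : ∀ y, s y = true → t y = true) :
    onesCount s ≤ onesCount t := by
  apply Finset.card_le_card
  intro y hy
  simp only [Finset.mem_filter, Finset.mem_univ, true_and] at hy ⊢
  exact hd y hy

end Aux

/-- any update sequence ending in a stable profile can be replaced by a
sequence with at most two updates per vertex, in which all 0-to-1 flips (each by an
unhappy vertex) precede all 1-to-0 flips, ending with at least as many 1s. -/
theorem stmt13 [Fintype V] [DecidableEq V] (G : SimpleGraph V) [DecidableRel G.Adj]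
    (s₀ s : V → Bool) (hreach : ReachesProf G s₀ s) (hstable : StableProf G s) :
    ∃ (L₁ L₂ : List V) (m t : V → Bool),
      Run01 G s₀ L₁ m ∧ Run10 G m L₂ t ∧
      (∀ x : V, (L₁ ++ L₂).count x ≤ 2) ∧
      onesCount s ≤ onesCount t := by
  induction hreach using Relation.ReflTransGen.head_induction_on with
  | refl => exact ⟨[], [], s, s, Run01.nil s, Run10.nil s, by simp, le_rfl⟩
  | head hstep hrest ih =>
    rename_i a b
    obtain ⟨L₁, L₂, m, t, h1, h2, hcnt, hle⟩ := ih
    obtain ⟨x, hun, hb⟩ := hstep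
    cases hax : a x with
    | false =>
      have hb' : b = Function.update a x true := by rw [hb, hax]; rfl
      subst hb'
      refine ⟨x :: L₁, L₂, m, t, Run01.cons _ _ _ _ hax hun h1, h2, ?_, hle⟩
      intro y
      rcases eq_or_ne y x with rfl | hne
      · have hy1 : y ∉ L₁ := run01_not_mem G h1 y (by simp)
        have hcnt1 : List.count y L₁ = 0 := List.count_eq_zero.mpr hy1
        have hcnt2 : List.count y L₂ ≤ 1 :=
          List.nodup_iff_count_le_one.mp (run10_nodup G h2) y
        simp only [List.count_cons_self, List.count_append, hcnt1]
        omega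
      · have hcnt1 : List.count y L₁ ≤ 1 :=
          List.nodup_iff_count_le_one.mp (run01_nodup G h1) y
        have hcnt2 : List.count y L₂ ≤ 1 :=
          List.nodup_iff_count_le_one.mp (run10_nodup G h2) y
        simp only [List.count_cons_of_ne hne.symm, List.count_append]
        omega
    | true =>
      have hb' : b = Function.update a x false := by rw [hb, hax]; rfl
      subst hb'
      have hd : ∀ y, Function.update a x false y = true → a y = true := by
        intro y hy
        rcases eq_or_ne y x with rfl | hne
        · simp at hy
        · rwa [Function.update_of_ne hne] at hy
      obtain ⟨L₁', m', h1', hdm⟩ := run01_dom G h1 a hd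
      obtain ⟨t', h2', hdt⟩ := run10_dom G h2 m' hdm
      refine ⟨L₁', L₂, m', t', h1', h2', ?_, le_trans hle (onesCount_mono hdt)⟩
      intro y
      have hcnt1 : List.count y L₁' ≤ 1 :=
        List.nodup_iff_count_le_one.mp (run01_nodup G h1') y
      have hcnt2 : List.count y L₂ ≤ 1 :=
        List.nodup_iff_count_le_one.mp (run10_nodup G h2') y
      simp only [List.count_append]
      omega
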